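/- Let G be a group with automorphism τ and t with τ² = Int(t), τ(t) = t. If (π, V) is a conjugate self-dual finite-dimensional irreducible representation of odd dimension m, then its parity C_π equals det π(t). -/

import Mathlib

/-- The parity of a conjugate self-dual irreducible representation of odd
dimension `m` equals `det (π t)`. -/
theorem parity_odd_dim {G V : Type*} [Group G] [AddCommGroup V] [Module ℂ V]
    [FiniteDimensional ℂ V] (m : ℕ) (hm : Module.finrank ℂ V = m) (hodd : Odd m)
    (τ : G ≃* G) (t : G)
    (hτ2 : ∀ g : G, τ (τ g) = t * g * t⁻¹) (hτt : τ t = t)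
    (π : Representation ℂ G V)
    (hirr : ∀ W : Submodule ℂ V, (∀ (g : G), ∀ x ∈ W, π g x ∈ W) → W = ⊥ ∨ W = ⊤)
    (B : V →ₗ[ℂ] V →ₗ[ℂ] ℂ)
    (hB1 : ∀ x : V, (∀ y : V, B x y = 0) → x = 0)
    (hB2 : ∀ y : V, (∀ x : V, B x y = 0) → y = 0)
    (hinv : ∀ (g : G) (x y : V), B (π (τ g) x) (π g y) = B x y)
    (C : ℂ) (hC : C = 1 ∨ C = -1)
    (hpar : ∀ x y : V, B (π t y) x = C * B x y) :
    C = LinearMap.det (π t) := by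
  subst hm
  set n := Module.finrank ℂ V with hn
  let b : Module.Basis (Fin n) ℂ V := Module.finBasis ℂ V
  set M : Matrix (Fin n) (Fin n) ℂ := Matrix.of fun i j => B (b i) (b j) with hM
  set A := LinearMap.toMatrix b b (π t) with hA
  -- key matrix relation
  have key : A.transpose * M = C • M.transpose := by
    ext i j
    have hrep : (π t) (b i) = ∑ k, A k i • b k := by
      conv_lhs => rw [← b.sum_repr ((π t) (b i))]
      refine Finset.sum_congr rfl fun k _ => ?_
      rw [hA, LinearMap.toMatrix_apply]
    have h1 : B ((π t) (b i)) (b j) = ∑ k, A k i * B (b k) (b j) := by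
      rw [hrep, map_sum, LinearMap.sum_apply]
      exact Finset.sum_congr rfl fun k _ => by
        rw [map_smul, LinearMap.smul_apply, smul_eq_mul]
    have h2 : B ((π t) (b i)) (b j) = C * B (b j) (b i) := hpar (b j) (b i)
    simp only [Matrix.mul_apply, Matrix.transpose_apply, Matrix.smul_apply,
      smul_eq_mul, hM, Matrix.of_apply]
    rw [← h1, h2]
  -- M has nonzero determinant
  have hdet : M.det ≠ 0 := by
    intro h0
    obtain ⟨v, hv, hvM⟩ := (Matrix.exists_vecMul_eq_zero_iff).2 h0
    apply hv
    have hx : (∑ i, v i • b i) = 0 := by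
      apply hB1
      intro y
      have hbj : ∀ j, B (∑ i, v i • b i) (b j) = 0 := by
        intro j
        have : B (∑ i, v i • b i) (b j) = ∑ i, v i * M i j := by
          rw [map_sum, LinearMap.sum_apply]
          exact Finset.sum_congr rfl fun i _ => by
            rw [map_smul, LinearMap.smul_apply, smul_eq_mul]; rfl
        rw [this]
        have := congrFun hvM j
        simpa [Matrix.vecMul, dotProduct] using this
      conv_lhs => rw [← b.sum_repr y]
      rw [map_sum]
      refine Finset.sum_eq_zero fun j _ => by rw [map_smul, smul_eq_mul, hbj, mul_zero]
    have := b.equivFun.symm.injective (a₁ := v) (a₂ := 0)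
    simp only [Module.Basis.equivFun_symm_apply, map_zero] at this
    exact this (by simpa using hx)
  -- take determinants
  have hdets : A.det * M.det = C ^ n * M.det := by
    have := congrArg Matrix.det key
    rwa [Matrix.det_mul, Matrix.det_transpose, Matrix.det_smul,
      Matrix.det_transpose, Fintype.card_fin] at this
  have hAdet : A.det = C ^ n := mul_right_cancel₀ hdet hdets
  have hCn : C ^ n = C := by
    rcases hC with h | h
    · rw [h, one_pow]
    · rw [h, hodd.neg_one_pow]
  rw [← LinearMap.det_toMatrix b, ← hA, hAdet, hCn]
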